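/- Let m be a positive integer having at most three distinct prime divisors, let a and b be integers, and let S be a finite set of integers with 0 ∈ S, |S| ≥ 3, and the gcd of m, a, b together with all elements of S equal to 1. Then at least one of the following holds: (i) there exist distinct c, c' ∈ S with gcd(m, a, c − c', b) = 1; (ii) there exist pairwise distinct c, c', c'' ∈ S with gcd(m, c − c'', c' − c'') = 1. -/

import Mathlib

private lemma gcdOneAux (T : Finset ℤ) (m : ℕ) (hm : 0 < m) (hmT : (m:ℤ) ∈ T)
    (h : ∀ p : ℕ, p.Prime → ¬ ∀ x ∈ T, (p:ℤ) ∣ x) : T.gcd id = 1 := by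
  by_contra hne
  have hgm : T.gcd id ∣ (m:ℤ) := by exact Finset.gcd_dvd hmT
  have hg0 : T.gcd id ≠ 0 := by
    intro h0
    rw [h0] at hgm
    have : (m:ℤ) = 0 := zero_dvd_iff.1 hgm
    omega
  have hnorm : normalize (T.gcd id) = T.gcd id := Finset.normalize_gcd
  have h1 : (T.gcd id).natAbs ≠ 1 := by
    intro h1
    rcases Int.isUnit_iff.1 (Int.isUnit_iff_natAbs_eq.2 h1) with h' | h'
    · exact hne h'
    · have hge := Int.nonneg_of_normalize_eq_self hnorm
      rw [h'] at hge; omega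
  have hpp : (T.gcd id).natAbs.minFac.Prime := Nat.minFac_prime h1
  apply h _ hpp
  intro x hx
  have h2 : ((T.gcd id).natAbs.minFac : ℤ) ∣ T.gcd id := by
    have : ((T.gcd id).natAbs.minFac : ℤ) ∣ ((T.gcd id).natAbs : ℤ) :=
      Int.natCast_dvd_natCast.2 (Nat.minFac_dvd _)
    exact this.trans (Int.natAbs_dvd.2 dvd_rfl)
  exact h2.trans (by exact Finset.gcd_dvd hx)

private lemma subNotDvd1 {k x y : ℤ} (hx : ¬ k ∣ x) (hy : k ∣ y) : ¬ k ∣ (x - y) := by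
  intro hd
  exact hx (by simpa using dvd_add hd hy)

private lemma subNotDvd2 {k x y : ℤ} (hx : k ∣ x) (hy : ¬ k ∣ y) : ¬ k ∣ (x - y) := by
  intro hd
  exact hy (by simpa using dvd_sub hx hd)


/-- If `m` has at most three distinct prime divisors, `a, b` are integers and `S` is
a finite set of integers containing `0` with `|S| ≥ 3` and `gcd(m, a, b, S) = 1`,
then either there are distinct `c, c' ∈ S` with `gcd(m, a, c - c', b) = 1`, or there
are pairwise distinct `c, c', c'' ∈ S` with `gcd(m, c - c'', c' - c'') = 1`. -/
theorem exists_connected_spanning_subgraph_parameters (m : ℕ) (hm : 0 < m)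
    (hprimes : m.primeFactors.card ≤ 3) (a b : ℤ)
    (S : Finset ℤ) (h0S : (0 : ℤ) ∈ S) (hS : 3 ≤ S.card)
    (hgcd : Finset.gcd (insert (m : ℤ) (insert a (insert b S))) id = 1) :
    (∃ c ∈ S, ∃ c' ∈ S, c ≠ c' ∧
      Finset.gcd {(m : ℤ), a, c - c', b} id = 1) ∨
    (∃ c ∈ S, ∃ c' ∈ S, ∃ c'' ∈ S, c ≠ c' ∧ c ≠ c'' ∧ c' ≠ c'' ∧
      Finset.gcd {(m : ℤ), c - c'', c' - c''} id = 1) := by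
  classical
  set P : Finset ℕ := m.primeFactors.filter (fun p => (p:ℤ) ∣ a ∧ (p:ℤ) ∣ b) with hPdef
  have hPsub : P ⊆ m.primeFactors := Finset.filter_subset _ _
  have hmemP : ∀ p : ℕ, p.Prime → (p:ℤ) ∣ (m:ℤ) → (p:ℤ) ∣ a → (p:ℤ) ∣ b → p ∈ P := by
    intro p pp hdm hda hdb
    exact Finset.mem_filter.2
      ⟨Nat.mem_primeFactors.2 ⟨pp, Int.natCast_dvd_natCast.1 hdm, hm.ne'⟩, hda, hdb⟩
  have hPfacts : ∀ p ∈ P, p.Prime ∧ (p:ℤ) ∣ (m:ℤ) ∧ (p:ℤ) ∣ a ∧ (p:ℤ) ∣ b := by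
    intro p hp
    obtain ⟨h1, h2, h3⟩ := Finset.mem_filter.1 hp
    exact ⟨Nat.prime_of_mem_primeFactors h1,
      Int.natCast_dvd_natCast.2 (Nat.dvd_of_mem_primeFactors h1), h2, h3⟩
  -- for each p in P there is an element of S not divisible by p
  have hwit : ∀ p ∈ P, ∃ s ∈ S, ¬ (p:ℤ) ∣ s := by
    intro p hp
    by_contra hcon
    push_neg at hcon
    obtain ⟨hpp, hdm, hda, hdb⟩ := hPfacts p hp
    have hdvd : (p:ℤ) ∣ Finset.gcd (insert (m:ℤ) (insert a (insert b S))) id := by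
      apply Finset.dvd_gcd
      intro x hx
      simp only [Finset.mem_insert] at hx
      rcases hx with rfl | rfl | rfl | hx
      · exact hdm
      · exact hda
      · exact hdb
      · exact hcon x hx
    rw [hgcd] at hdvd
    have h1 : (p:ℤ) ≤ 1 := Int.le_of_dvd one_pos hdvd
    have h2 := hpp.two_le
    omega
  -- Case A : some nonzero element of S avoids all primes in P
  by_cases hA : ∃ x ∈ S, x ≠ 0 ∧ ∀ p ∈ P, ¬ (p:ℤ) ∣ x
  · obtain ⟨x, hxS, hx0, hxP⟩ := hA
    left
    refine ⟨x, hxS, 0, h0S, hx0, ?_⟩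
    apply gcdOneAux _ m hm (by simp)
    intro t tp hall
    have hdm := hall (m:ℤ) (by simp)
    have hda := hall a (by simp)
    have hdx := hall (x - 0) (by simp)
    have hdb := hall b (by simp)
    exact hxP t (hmemP t tp hdm hda hdb) (by simpa using hdx)
  push_neg at hA
  have hA' : ∀ x ∈ S, x ≠ 0 → ∃ p ∈ P, (p:ℤ) ∣ x := by
    intro x hx hx0
    obtain ⟨p, hp, hpd⟩ := hA x hx hx0
    exact ⟨p, hp, hpd⟩
  have hc3 : P.card ≤ 3 := le_trans (Finset.card_le_card hPsub) hprimes
  have hcases : P.card = 0 ∨ P.card = 1 ∨ P.card = 2 ∨ P.card = 3 := by omega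
  have hxne : ∃ x ∈ S, x ≠ 0 := by
    obtain ⟨u, hu, v, hv, huv⟩ := Finset.one_lt_card.1 (by omega : 1 < S.card)
    by_cases h : u = 0
    · subst h; exact ⟨v, hv, fun h' => huv h'.symm⟩
    · exact ⟨u, hu, h⟩
  rcases hcases with h | h | h | h
  · -- P empty : contradiction
    rw [Finset.card_eq_zero] at h
    obtain ⟨x, hxS, hx0⟩ := hxne
    obtain ⟨p, hp, _⟩ := hA' x hxS hx0
    rw [h] at hp
    exact absurd hp (Finset.notMem_empty p)
  · -- |P| = 1 : contradiction
    obtain ⟨p, hP1⟩ := Finset.card_eq_one.1 h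
    have hpP : p ∈ P := by rw [hP1]; exact Finset.mem_singleton_self p
    obtain ⟨s, hsS, hps⟩ := hwit p hpP
    have hs0 : s ≠ 0 := fun h0 => hps (h0 ▸ dvd_zero _)
    obtain ⟨q, hqP, hqs⟩ := hA' s hsS hs0
    rw [hP1, Finset.mem_singleton] at hqP
    exact absurd (hqP ▸ hqs) hps
  · -- |P| = 2 : option (i) with the two witnesses
    obtain ⟨p, q, hpq, hP2⟩ := Finset.card_eq_two.1 h
    have hpP : p ∈ P := by rw [hP2]; simp
    have hqP : q ∈ P := by rw [hP2]; simp
    obtain ⟨sp, hspS, hpsp⟩ := hwit p hpP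
    obtain ⟨sq, hsqS, hqsq⟩ := hwit q hqP
    have hsp0 : sp ≠ 0 := fun h0 => hpsp (h0 ▸ dvd_zero _)
    have hsq0 : sq ≠ 0 := fun h0 => hqsq (h0 ▸ dvd_zero _)
    -- q ∣ sp
    have hqsp : (q:ℤ) ∣ sp := by
      obtain ⟨k, hkP, hksp⟩ := hA' sp hspS hsp0
      rw [hP2, Finset.mem_insert, Finset.mem_singleton] at hkP
      rcases hkP with rfl | rfl
      · exact absurd hksp hpsp
      · exact hksp
    have hpsq : (p:ℤ) ∣ sq := by
      obtain ⟨k, hkP, hksq⟩ := hA' sq hsqS hsq0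
      rw [hP2, Finset.mem_insert, Finset.mem_singleton] at hkP
      rcases hkP with rfl | rfl
      · exact hksq
      · exact absurd hksq hqsq
    have hne : sp ≠ sq := fun h0 => hpsp (h0 ▸ hpsq)
    left
    refine ⟨sp, hspS, sq, hsqS, hne, ?_⟩
    apply gcdOneAux _ m hm (by simp)
    intro t tp hall
    have hdm := hall (m:ℤ) (by simp)
    have hda := hall a (by simp)
    have hdx := hall (sp - sq) (by simp)
    have hdb := hall b (by simp)
    have htP := hmemP t tp hdm hda hdb
    rw [hP2, Finset.mem_insert, Finset.mem_singleton] at htP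
    rcases htP with rfl | rfl
    · exact subNotDvd1 hpsp hpsq hdx
    · exact subNotDvd2 hqsp hqsq hdx
  · -- |P| = 3 : option (ii)
    obtain ⟨p, q, r, hpq, hpr, hqr, hP3⟩ := Finset.card_eq_three.1 h
    have hPeq : P = m.primeFactors := Finset.eq_of_subset_of_card_le hPsub (by omega)
    have hQ : m.primeFactors ⊆ P := le_of_eq hPeq.symm
    have hpP : p ∈ P := by rw [hP3]; simp
    have hqP : q ∈ P := by rw [hP3]; simp
    have hrP : r ∈ P := by rw [hP3]; simp
    by_cases hB1 : ∃ x ∈ S, ∃ k ∈ P, (k:ℤ) ∣ x ∧ ∀ j ∈ P, j ≠ k → ¬ (j:ℤ) ∣ x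
    · obtain ⟨x, hxS, k, hkP, hkx, hoth⟩ := hB1
      -- pick j ∈ P, j ≠ k
      have hj : ∃ j ∈ P, j ≠ k := by
        by_cases hkp : k = p
        · exact ⟨q, hqP, fun h' => hpq (h' ▸ hkp).symm⟩
        · exact ⟨p, hpP, fun h' => hkp h'.symm⟩
      obtain ⟨j, hjP, hjk⟩ := hj
      have hjx : ¬ (j:ℤ) ∣ x := hoth j hjP hjk
      have hx0 : x ≠ 0 := fun h0 => hjx (h0 ▸ dvd_zero _)
      obtain ⟨y, hyS, hky⟩ := hwit k hkP
      have hy0 : y ≠ 0 := fun h0 => hky (h0 ▸ dvd_zero _)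
      have hxy : x ≠ y := fun h0 => hky (h0 ▸ hkx)
      right
      refine ⟨x, hxS, y, hyS, 0, h0S, hxy, hx0, hy0, ?_⟩
      apply gcdOneAux _ m hm (by simp)
      intro t tp hall
      have hdm := hall (m:ℤ) (by simp)
      have hdx := hall (x - 0) (by simp)
      have hdy := hall (y - 0) (by simp)
      have htP : t ∈ P :=
        hQ (Nat.mem_primeFactors.2 ⟨tp, Int.natCast_dvd_natCast.1 hdm, hm.ne'⟩)
      by_cases htk : t = k
      · subst htk; exact hky (by simpa using hdy)
      · exact hoth t htP htk (by simpa using hdx)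
    · push_neg at hB1
      -- every x in S divisible by some prime of P is divisible by at least two of them;
      -- hence any x not divisible by u is divisible by both of the other two primes
      have htwo : ∀ x ∈ S, ∀ u v w : ℕ, P = {u, v, w} → v ≠ w → ¬ (u:ℤ) ∣ x →
          (v:ℤ) ∣ x ∧ (w:ℤ) ∣ x := by
        intro x hxS u v w hPuvw hvw hux
        have hx0 : x ≠ 0 := fun h0 => hux (h0 ▸ dvd_zero _)
        obtain ⟨k, hkP, hkx⟩ := hA' x hxS hx0
        obtain ⟨j, hjP, hjk, hjx⟩ := hB1 x hxS k hkP hkx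
        have hku : k ≠ u := fun h' => hux (h' ▸ hkx)
        have hju : j ≠ u := fun h' => hux (h' ▸ hjx)
        rw [hPuvw] at hkP hjP
        simp only [Finset.mem_insert, Finset.mem_singleton] at hkP hjP
        rcases hkP with rfl | rfl | rfl
        · exact absurd rfl hku
        · rcases hjP with rfl | rfl | rfl
          · exact absurd rfl hju
          · exact absurd rfl hjk
          · exact ⟨hkx, hjx⟩
        · rcases hjP with rfl | rfl | rfl
          · exact absurd rfl hju
          · exact ⟨hjx, hkx⟩
          · exact absurd rfl hjk
      have hP3q : P = {q, p, r} := by rw [hP3]; ext t; simp; tauto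
      have hP3r : P = {r, p, q} := by rw [hP3]; ext t; simp; tauto
      obtain ⟨sp, hspS, hpsp⟩ := hwit p hpP
      obtain ⟨sq, hsqS, hqsq⟩ := hwit q hqP
      obtain ⟨sr, hsrS, hrsr⟩ := hwit r hrP
      obtain ⟨hq_sp, hr_sp⟩ := htwo sp hspS p q r hP3 hqr hpsp
      obtain ⟨hp_sq, hr_sq⟩ := htwo sq hsqS q p r hP3q hpr hqsq
      obtain ⟨hp_sr, hq_sr⟩ := htwo sr hsrS r p q hP3r hpq hrsr
      have h12 : sp ≠ sq := fun h0 => hpsp (h0 ▸ hp_sq)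
      have h13 : sp ≠ sr := fun h0 => hpsp (h0 ▸ hp_sr)
      have h23 : sq ≠ sr := fun h0 => hqsq (h0 ▸ hq_sr)
      right
      refine ⟨sp, hspS, sq, hsqS, sr, hsrS, h12, h13, h23, ?_⟩
      apply gcdOneAux _ m hm (by simp)
      intro t tp hall
      have hdm := hall (m:ℤ) (by simp)
      have hd1 := hall (sp - sr) (by simp)
      have hd2 := hall (sq - sr) (by simp)
      have htP : t ∈ P :=
        hQ (Nat.mem_primeFactors.2 ⟨tp, Int.natCast_dvd_natCast.1 hdm, hm.ne'⟩)
      rw [hP3, Finset.mem_insert, Finset.mem_insert, Finset.mem_singleton] at htP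
      rcases htP with rfl | rfl | rfl
      · exact subNotDvd1 hpsp hp_sr hd1
      · exact subNotDvd1 hqsq hq_sr hd2
      · exact subNotDvd2 hr_sp hrsr hd1
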